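/- Let M = (m_1,...,m_k) be a tuple of positive integers with m_k ≥ 2, and let I = (i_1,...,i_j) and J = (j_1,...,j_ℓ) be allowable sub-tuples for M. Then n⁺(M_I) − n⁻(M_I) = n⁺(M_J) − n⁻(M_J) if and only if Σ_{s=1}^{j} (−1)^{i_s} m_{i_s} = Σ_{t=1}^{ℓ} (−1)^{j_t} m_{j_t}. -/

import Mathlib

/-- Continued fraction value of a list of rationals:
`cf [n₁,...,n_k] = 1/(n₁ + 1/(n₂ + ... + 1/n_k))`. -/
def cf : List ℚ → ℚ
  | [] => 0
  | n :: L => 1 / (n + cf L)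

/-- The alternating sequence `-2, 2, -2, 2, ..., ±2` of length `n`. -/
def altSeq (n : ℕ) : List ℤ :=
  (List.range n).map (fun j => (-1 : ℤ) ^ (j + 1) * 2)

/-- The `i`-th entry (1-based) of the tuple `M`. -/
def ent (M : List ℕ) (i : ℕ) : ℕ := M.getD (i - 1) 0

/-- `I` is an allowable sub-tuple for the tuple `M` of positive integers:
a strictly increasing tuple of indices in `{1,...,k}` with consecutive
gaps at least 2, such that for every index `i` with `m_i = 1` at least
one of `i-1, i, i+1` belongs to `I`. -/
def IsAllowable (M : List ℕ) (I : List ℕ) : Prop :=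
  I.Chain' (fun a b => a + 2 ≤ b) ∧
  (∀ i ∈ I, 1 ≤ i ∧ i ≤ M.length) ∧
  (∀ i, 1 ≤ i → i ≤ M.length → ent M i = 1 → (i - 1 ∈ I ∨ i ∈ I ∨ i + 1 ∈ I))

/-- The sign `∏_{i' ∈ I, i' < i} (-1)^(m_{i'})` adjusting the entries coming
from position `i` of `M`. -/
def subSign (M : List ℕ) (I : List ℕ) (i : ℕ) : ℤ :=
  ((I.filter (fun i' => decide (i' < i))).map (fun i' => (-1 : ℤ) ^ ent M i')).prod

/-- Before sign adjustment, the block of entries of `M_I` coming from position `i`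
of `M`: either the alternating sequence `-2,2,...,±2` of length `m_i - 1`
(if `i ∈ I`), or the single entry `m_i` increased by 1 for each neighbor of `i`
lying in `I`. -/
def block (M : List ℕ) (I : List ℕ) (i : ℕ) : List ℤ :=
  if i ∈ I then altSeq (ent M i - 1)
  else [(ent M i : ℤ) + (if i - 1 ∈ I then 1 else 0) + (if i + 1 ∈ I then 1 else 0)]

/-- The continued fraction expansion `M_I` associated to an allowable sub-tuple `I`
of `M`. -/
def MI (M : List ℕ) (I : List ℕ) : List ℤ :=
  ((List.range M.length).map (fun idx =>
    (block M I (idx + 1)).map (fun q => subSign M I (idx + 1) * q))).flatten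

/-- `n⁺(N) = #{i : (-1)^(i+1) n_i > 0}` (1-based `i`). -/
def nplus (N : List ℤ) : ℕ :=
  ((List.range N.length).filter
    (fun idx => decide (0 < (-1 : ℤ) ^ idx * N.getD idx 0))).length

/-- `n⁻(N) = #{i : (-1)^(i+1) n_i < 0}` (1-based `i`). -/
def nminus (N : List ℤ) : ℕ :=
  ((List.range N.length).filter
    (fun idx => decide ((-1 : ℤ) ^ idx * N.getD idx 0 < 0))).length

/-- `Σ_{i ∈ I} (-1)^i m_i`. -/
def sgnSum (M : List ℕ) (I : List ℕ) : ℤ :=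
  (I.map (fun i => (-1 : ℤ) ^ i * (ent M i : ℤ))).sum

/-- The dual sub-tuple `(k+1-i_j, ..., k+1-i_1)` of `I = (i_1,...,i_j)`. -/
def dualSub (k : ℕ) (I : List ℕ) : List ℕ :=
  (I.map (fun i => k + 1 - i)).reverse

/-- `(m_1,...,m_k)` is super-increasing if `m_i > Σ_{j<i} m_j` for all `i`. -/
def SuperInc (M : List ℕ) : Prop :=
  ∀ i, 1 ≤ i → i ≤ M.length → (M.take (i - 1)).sum < ent M i


/-- Alternating sign sum: `asum ε [x₁,x₂,...] = sign(ε x₁) + sign(-ε x₂) + ...`. -/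
def asum : ℤ → List ℤ → ℤ
  | _, [] => 0
  | e, x :: L => (e * x).sign + asum (-e) L

theorem asum_nil (e : ℤ) : asum e [] = 0 := rfl
theorem asum_cons (e x : ℤ) (L : List ℤ) : asum e (x :: L) = (e * x).sign + asum (-e) L := rfl

theorem asum_append (A B : List ℤ) (e : ℤ) :
    asum e (A ++ B) = asum e A + asum ((-1) ^ A.length * e) B := by
  induction A generalizing e with
  | nil => simp [asum_nil]
  | cons x A ih =>
    simp only [List.cons_append, asum_cons, ih (-e), List.length_cons, pow_succ]
    ring_nf

theorem prod_pm (l : List ℤ) (h : ∀ x ∈ l, x = 1 ∨ x = -1) : l.prod = 1 ∨ l.prod = -1 := by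
  induction l with
  | nil => simp
  | cons x L ih =>
    rcases h x (by simp) with hx | hx <;>
      rcases ih (fun y hy => h y (by simp [hy])) with hL | hL <;> simp [hx, hL]
theorem neg_one_pow_pm (n : ℕ) : ((-1 : ℤ)) ^ n = 1 ∨ ((-1 : ℤ)) ^ n = -1 := by
  rcases Nat.even_or_odd n with h | h
  · left; exact h.neg_one_pow
  · right; exact h.neg_one_pow

theorem subSign_pm (M I : List ℕ) (i : ℕ) : subSign M I i = 1 ∨ subSign M I i = -1 := by
  apply prod_pm
  intro x hx
  simp only [List.mem_map] at hx
  obtain ⟨i', _, rfl⟩ := hx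
  exact neg_one_pow_pm _

theorem filter_prod_succ (I : List ℕ) (hnd : I.Nodup) (f : ℕ → ℤ) (a : ℕ) :
    ((I.filter (fun x => decide (x < a + 1))).map f).prod
      = ((I.filter (fun x => decide (x < a))).map f).prod * (if a ∈ I then f a else 1) := by
  induction I with
  | nil => simp
  | cons x J ih =>
    simp only [List.nodup_cons] at hnd
    rcases lt_trichotomy x a with hx | rfl | hx
    · have h1 : x < a + 1 := by omega
      have h2 : a ≠ x := by omega
      simp only [List.filter_cons, hx, h1, decide_true, if_true, List.map_cons,
        List.prod_cons, List.mem_cons, h2, false_or, ih hnd.2]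
      ring
    · have h1 : x < x + 1 := by omega
      have h2 : ¬ (x < x) := by omega
      simp only [List.filter_cons, decide_eq_true_eq, h1, if_true, h2, if_false,
        List.map_cons, List.prod_cons, List.mem_cons, true_or, if_true, ih hnd.2,
        hnd.1, if_false, mul_one]
      ring
    · have h1 : ¬ (x < a + 1) := by omega
      have h2 : ¬ (x < a) := by omega
      have h3 : a ≠ x := by omega
      simp only [List.filter_cons, decide_eq_true_eq, h1, if_false, h2, List.mem_cons,
        h3, false_or, ih hnd.2]

theorem altSeq_succ (n : ℕ) :
    altSeq (n + 1) = (-2 : ℤ) :: (altSeq n).map (fun q => -q) := by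
  simp only [altSeq]
  rw [List.range_succ_eq_map, List.map_cons, List.map_map, List.map_map]
  refine List.cons_eq_cons.mpr ⟨by norm_num, List.map_congr_left fun j _ => ?_⟩
  simp only [Function.comp_apply, Nat.succ_eq_add_one, pow_succ]
  ring

theorem asum_altSeq (n : ℕ) : ∀ e s : ℤ, (e = 1 ∨ e = -1) → (s = 1 ∨ s = -1) →
    asum e ((altSeq n).map (fun q => s * q)) = (n : ℤ) * (-(e * s)) := by
  induction n with
  | zero => intro e s he hs; simp [altSeq, asum_nil]
  | succ n ih =>
    intro e s he hs
    rw [altSeq_succ]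
    simp only [List.map_cons, List.map_map, asum_cons]
    have h1 : (fun q => s * q) ∘ (fun q : ℤ => -q) = fun q => (-s) * q := by
      funext q; simp only [Function.comp_apply]; ring
    rw [h1, ih (-e) (-s) (by rcases he with h|h <;> simp [h]) (by rcases hs with h|h <;> simp [h])]
    have h2 : (e * (s * -2)).sign = -(e*s) := by
      rcases he with rfl|rfl <;> rcases hs with rfl|rfl <;> decide
    rw [h2]
    push_cast
    ring

theorem length_filter_range_succ (p : ℕ → Bool) (n : ℕ) :
    ((List.range (n + 1)).filter p).length
      = (if p 0 then 1 else 0) + ((List.range n).filter (fun i => p (i + 1))).length := by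
  rw [List.range_succ_eq_map, List.filter_cons, List.filter_map]
  have : (p ∘ Nat.succ) = fun i => p (i + 1) := rfl
  split <;> simp [this] <;> omega

theorem asum_count (N : List ℤ) : ∀ e : ℤ, e = 1 ∨ e = -1 →
    asum e N =
      ((((List.range N.length).filter
          (fun idx => decide (0 < e * ((-1 : ℤ) ^ idx * N.getD idx 0)))).length : ℤ))
      - ((((List.range N.length).filter
          (fun idx => decide (e * ((-1 : ℤ) ^ idx * N.getD idx 0) < 0))).length : ℤ)) := by
  induction N with
  | nil => intro e he; simp [asum_nil]
  | cons x L ih =>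
    intro e he
    rw [asum_cons, ih (-e) (by rcases he with rfl | rfl <;> simp)]
    rw [List.length_cons, length_filter_range_succ, length_filter_range_succ]
    have heq : ∀ i : ℕ, e * ((-1 : ℤ) ^ (i + 1) * (x :: L).getD (i + 1) 0)
        = (-e) * ((-1 : ℤ) ^ i * L.getD i 0) := by
      intro i
      simp only [List.getD_cons_succ, pow_succ]
      ring
    have hc1 : (fun i => decide (0 < e * ((-1 : ℤ) ^ (i + 1) * (x :: L).getD (i + 1) 0)))
        = (fun idx => decide (0 < (-e) * ((-1 : ℤ) ^ idx * L.getD idx 0))) := by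
      funext i
      exact decide_eq_decide.mpr (by rw [heq i])
    have hc2 : (fun i => decide (e * ((-1 : ℤ) ^ (i + 1) * (x :: L).getD (i + 1) 0) < 0))
        = (fun idx => decide ((-e) * ((-1 : ℤ) ^ idx * L.getD idx 0) < 0)) := by
      funext i
      exact decide_eq_decide.mpr (by rw [heq i])
    beta_reduce
    rw [hc1, hc2]
    simp only [List.getD_cons_zero, pow_zero, one_mul, decide_eq_true_eq]
    have hsign : (e * x).sign = (if 0 < e * x then (1 : ℤ) else 0) - (if e * x < 0 then 1 else 0) := by
      rcases lt_trichotomy (e * x) 0 with h | h | h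
      · rw [Int.sign_eq_neg_one_of_neg h, if_neg (by omega), if_pos h]
        ring
      · rw [h]; norm_num
      · rw [Int.sign_eq_one_of_pos h, if_pos h, if_neg (by omega)]
        ring
    rw [hsign]
    push_cast [apply_ite]
    split_ifs <;> ring

theorem npm_eq_asum (N : List ℤ) : (nplus N : ℤ) - nminus N = asum 1 N := by
  rw [asum_count N 1 (Or.inl rfl)]
  simp [nplus, nminus]

theorem subSign_succ (M : List ℕ) (I : List ℕ) (hnd : I.Nodup) (a : ℕ) :
    subSign M I (a + 2) = subSign M I (a + 1) *
      (if a + 1 ∈ I then (-1 : ℤ) ^ ent M (a + 1) else 1) := by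
  have h := filter_prod_succ I hnd (fun i' => (-1 : ℤ) ^ ent M i') (a + 1)
  have h2 : a + 1 + 1 = a + 2 := by omega
  rw [h2] at h
  exact h

theorem altSeq_length (n : ℕ) : (altSeq n).length = n := by simp [altSeq]

theorem ent_pos (M : List ℕ) (hpos : ∀ m ∈ M, 0 < m) (i : ℕ) (h1 : 1 ≤ i)
    (h2 : i ≤ M.length) : 0 < ent M i := by
  have hlt : i - 1 < M.length := by omega
  rw [ent, List.getD_eq_getElem?_getD, List.getElem?_eq_getElem hlt]
  exact hpos _ (List.getElem_mem hlt)

theorem main_ind (M I : List ℕ) (hpos : ∀ m ∈ M, 0 < m) (hnd : I.Nodup)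
    (n : ℕ) : ∀ a, a + n ≤ M.length →
    asum (subSign M I (a + 1) * (-1) ^ a)
      (((List.range' (a + 1) n).map
          (fun i => (block M I i).map (fun q => subSign M I i * q))).flatten)
    = ((List.range' (a + 1) n).map
        (fun i => if i ∈ I then ((ent M i : ℤ) - 1) * (-1) ^ i else (-1) ^ (i + 1))).sum := by
  induction n with
  | zero => intro a ha; simp [asum_nil]
  | succ n ih =>
    intro a ha
    rw [List.range'_succ, List.map_cons, List.flatten_cons, List.map_cons, List.sum_cons,
      asum_append]
    have hs := subSign_pm M I (a + 1)
    have hmpos : 0 < ent M (a + 1) := ent_pos M hpos (a + 1) (by omega) (by omega)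
    obtain ⟨m', hm'⟩ : ∃ m', ent M (a + 1) = m' + 1 := ⟨ent M (a + 1) - 1, by omega⟩
    have hss := subSign_succ M I hnd a
    have ha2 : a + 1 + 1 = a + 2 := by omega
    by_cases hi : a + 1 ∈ I
    · -- block is altSeq
      rw [if_pos hi] at hss
      have hb : block M I (a + 1) = altSeq (ent M (a + 1) - 1) := by rw [block, if_pos hi]
      have hhead : asum (subSign M I (a + 1) * (-1) ^ a)
          ((block M I (a + 1)).map (fun q => subSign M I (a + 1) * q))
          = ((ent M (a + 1) : ℤ) - 1) * (-1) ^ (a + 1) := by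
        rw [hb, asum_altSeq _ _ _
          (by rcases hs with h | h <;> rcases Nat.even_or_odd a with hp | hp <;>
            simp [h, hp.neg_one_pow]) hs]
        rcases hs with h | h <;>
          · rw [hm']
            simp only [h, Nat.add_sub_cancel, pow_succ]
            push_cast
            ring
      have htrans : (-1 : ℤ) ^ ((block M I (a + 1)).map
            (fun q => subSign M I (a + 1) * q)).length * (subSign M I (a + 1) * (-1) ^ a)
          = subSign M I (a + 1 + 1) * (-1) ^ (a + 1) := by
        rw [ha2, hss, hb, List.length_map, altSeq_length, hm']
        simp only [Nat.add_sub_cancel, pow_succ]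
        ring
      rw [hhead, htrans, ih (a + 1) (by omega)]
      rw [if_pos hi]
    · -- block is a single positive entry
      rw [if_neg hi] at hss
      have hb : block M I (a + 1) = [(ent M (a + 1) : ℤ) +
          (if a + 1 - 1 ∈ I then 1 else 0) + (if a + 1 + 1 ∈ I then 1 else 0)] := by
        rw [block, if_neg hi]
      have hentpos : (0 : ℤ) < (ent M (a + 1) : ℤ) +
          (if a + 1 - 1 ∈ I then 1 else 0) + (if a + 1 + 1 ∈ I then 1 else 0) := by
        have : (0 : ℤ) < (ent M (a + 1) : ℤ) := by exact_mod_cast hmpos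
        split_ifs <;> omega
      have hhead : asum (subSign M I (a + 1) * (-1) ^ a)
          ((block M I (a + 1)).map (fun q => subSign M I (a + 1) * q))
          = (-1) ^ (a + 1 + 1) := by
        rw [hb]
        simp only [List.map_cons, List.map_nil, asum_cons, asum_nil, add_zero]
        have : subSign M I (a + 1) * (-1) ^ a * (subSign M I (a + 1) * ((ent M (a + 1) : ℤ) +
            (if a + 1 - 1 ∈ I then 1 else 0) + (if a + 1 + 1 ∈ I then 1 else 0)))
            = (-1) ^ a * ((ent M (a + 1) : ℤ) +
            (if a + 1 - 1 ∈ I then 1 else 0) + (if a + 1 + 1 ∈ I then 1 else 0)) := by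
          rcases hs with h | h <;> rw [h] <;> ring
        rw [this]
        rcases Nat.even_or_odd a with hp | hp
        · rw [hp.neg_one_pow, Int.sign_eq_one_of_pos (by omega)]
          have : Even (a + 1 + 1) := by
            rcases hp with ⟨c, hc⟩; exact ⟨c + 1, by omega⟩
          rw [this.neg_one_pow]
        · rw [hp.neg_one_pow]
          rw [Int.sign_eq_neg_one_of_neg (by omega)]
          have : Odd (a + 1 + 1) := by
            rcases hp with ⟨c, hc⟩; exact ⟨c + 1, by omega⟩
          rw [this.neg_one_pow]
      have htrans : (-1 : ℤ) ^ ((block M I (a + 1)).map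
            (fun q => subSign M I (a + 1) * q)).length * (subSign M I (a + 1) * (-1) ^ a)
          = subSign M I (a + 1 + 1) * (-1) ^ (a + 1) := by
        rw [ha2, hss, hb]
        simp only [List.length_map, List.length_cons, List.length_nil, pow_one, pow_succ]
        ring
      rw [hhead, htrans, ih (a + 1) (by omega)]
      rw [if_neg hi]

theorem sum_map_split (I : List ℕ) (M : List ℕ) (l : List ℕ) :
    (l.map (fun i => if i ∈ I then ((ent M i : ℤ) - 1) * (-1) ^ i else (-1) ^ (i + 1))).sum
      = (l.map (fun i => (-1 : ℤ) ^ (i + 1))).sum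
        + (l.map (fun i => if i ∈ I then (-1 : ℤ) ^ i * (ent M i : ℤ) else 0)).sum := by
  induction l with
  | nil => simp
  | cons x l ih =>
    simp only [List.map_cons, List.sum_cons, ih]
    by_cases hx : x ∈ I
    · simp only [hx, if_true, pow_succ]
      ring
    · simp only [hx, if_false]
      ring

theorem sum_ite_mem_list (k : ℕ) (I : List ℕ) (hnd : I.Nodup)
    (hbd : ∀ i ∈ I, 1 ≤ i ∧ i ≤ k) (g : ℕ → ℤ) :
    ((List.range' 1 k).map (fun i => if i ∈ I then g i else 0)).sum = (I.map g).sum := by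
  rw [← List.sum_toFinset _ (List.nodup_range' (s := 1) (n := k)), ← List.sum_toFinset _ hnd]
  have : ∀ i, (if i ∈ I then g i else 0) = (if i ∈ I.toFinset then g i else 0) := by
    intro i
    simp [List.mem_toFinset]
  rw [Finset.sum_congr rfl (fun i _ => this i), Finset.sum_ite_mem]
  congr 1
  rw [Finset.inter_eq_right]
  intro i hi
  rw [List.mem_toFinset] at hi ⊢
  rw [List.mem_range'_1]
  have := hbd i hi
  omega

theorem key_lemma (M : List ℕ) (hpos : ∀ m ∈ M, 0 < m) (I : List ℕ)
    (hI : IsAllowable M I) :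
    (nplus (MI M I) : ℤ) - (nminus (MI M I) : ℤ)
      = ((List.range' 1 M.length).map (fun i => (-1 : ℤ) ^ (i + 1))).sum + sgnSum M I := by
  obtain ⟨hch, hbd, -⟩ := hI
  have hpw : I.Pairwise (fun a b => a + 2 ≤ b) := by
    haveI : IsTrans ℕ (fun a b => a + 2 ≤ b) := ⟨fun a b c h1 h2 => by omega⟩
    exact List.isChain_iff_pairwise.mp hch
  have hnd : I.Nodup := hpw.imp (fun h => by omega)
  have hMI : MI M I = ((List.range' 1 M.length).map
      (fun i => (block M I i).map (fun q => subSign M I i * q))).flatten := by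
    rw [MI, List.range_eq_range']
    congr 1
    rw [← List.map_add_range' (a := 1) 0 M.length 1, List.map_map]
    apply List.map_congr_left
    intro idx _
    simp [Function.comp, Nat.add_comm]
  have hsub1 : subSign M I 1 = 1 := by
    rw [subSign]
    have : I.filter (fun i' => decide (i' < 1)) = [] := by
      rw [List.filter_eq_nil_iff]
      intro i hi
      have := (hbd i hi).1
      simp only [decide_eq_true_eq]
      omega
    rw [this]
    simp
  have hmain := main_ind M I hpos hnd M.length 0 (by omega)
  rw [npm_eq_asum, hMI]
  simp only [pow_zero, mul_one, hsub1] at hmain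
  rw [hmain, sum_map_split, sum_ite_mem_list M.length I hnd hbd]
  rfl

/-- Two allowable sub-tuples `I`, `J` of `M` give rise to the same value of
`n⁺ - n⁻` if and only if the corresponding signed sums agree. -/
theorem nplus_sub_nminus_eq_iff_sgnSum_eq (M : List ℕ) (hpos : ∀ m ∈ M, 0 < m)
    (hlast : 2 ≤ M.getLastD 0) (I J : List ℕ)
    (hI : IsAllowable M I) (hJ : IsAllowable M J) :
    (nplus (MI M I) : ℤ) - (nminus (MI M I) : ℤ) =
      (nplus (MI M J) : ℤ) - (nminus (MI M J) : ℤ) ↔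
    sgnSum M I = sgnSum M J := by
  rw [key_lemma M hpos I hI, key_lemma M hpos J hJ]
  exact add_right_inj _
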